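/- arXiv:1702.07849 — 3 statements merged into one kernel-verified Lean document; each statement's English description precedes it below -/
import Mathlib

section
/- Let L be a first-order language extending the language of rings whose only function symbols are those of the language of rings (no extra function symbols of arity > 0), and let D be an infinite integral domain which is an L-structure admitting quantifier elimination (every L-formula with parameters from D defines the same subset of D^n as some quantifier-free L-formula with parameters from D). Suppose D is equipped with a topological system: a topology τ_n on each D^n such that (1) for any n-ary L(D)-terms t_1, …, t_s the map D^n → D^s, a ↦ (t_1(a), …, t_s(a)), is continuous; (2) every singleton {a} ⊆ D is closed; (3) for every n-ary relation symbol R of L and every subsequence of indices 1 ≤ i_1 < … < i_k ≤ n, the set of tuples (a_{i_1}, …, a_{i_k}) ∈ D^k with all a_{i_j} ≠ 0 satisfying R at the point of D^n whose i_j-th coordinate is a_{i_j} and whose other coordinates are 0, and the analogous set satisfying the negation of R, are both open in D^k. Then every L-definable (with parameters) subset of D^n is a finite union of intersections of a Zariski closed subset of D^n with a special open subset of D^n; in particular, it is a finite union of locally closed subsets of D^n. -/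
open FirstOrder

/-- A *basic special open* subset of `D^n`: either the nonzero set of an `L(D)`-term, or
the set where the relation symbol `R` holds (respectively fails) at the point whose
`i_j`-th coordinate is `t_{i_j}(a)` and whose other coordinates are `0`, with all
`t_{i_j}(a) ≠ 0`.  Here `L = ring ⊕ Lrel` and parameters from `D` are represented by
extra variables evaluated via `id`. -/
def IsBasicSpecialOpen (Lrel : FirstOrder.Language) (D : Type*) [CommRing D]
    [FirstOrder.Ring.CompatibleRing D] [Lrel.Structure D] {n : ℕ}
    (S : Set (Fin n → D)) : Prop :=
  (∃ t : (FirstOrder.Language.ring.sum Lrel).Term (Fin n ⊕ D),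
      S = {a : Fin n → D | t.realize (Sum.elim a id) ≠ 0}) ∨
  (∃ (m k : ℕ) (R : Lrel.Relations m) (j : Fin k → Fin m), StrictMono j ∧
    ∃ t : Fin k → (FirstOrder.Language.ring.sum Lrel).Term (Fin n ⊕ D),
      S = {a : Fin n → D | (∀ l, (t l).realize (Sum.elim a id) ≠ 0) ∧
            FirstOrder.Language.Structure.RelMap R
              (Function.extend j (fun l => (t l).realize (Sum.elim a id)) 0)} ∨
      S = {a : Fin n → D | (∀ l, (t l).realize (Sum.elim a id) ≠ 0) ∧
            ¬ FirstOrder.Language.Structure.RelMap R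
              (Function.extend j (fun l => (t l).realize (Sum.elim a id)) 0)})

/-- A *special open* subset of `D^n`: a finite intersection of basic special open sets. -/
def IsSpecialOpen (Lrel : FirstOrder.Language) (D : Type*) [CommRing D]
    [FirstOrder.Ring.CompatibleRing D] [Lrel.Structure D] {n : ℕ}
    (S : Set (Fin n → D)) : Prop :=
  ∃ (s : ℕ) (U : Fin s → Set (Fin n → D)),
    (∀ i, IsBasicSpecialOpen Lrel D (U i)) ∧ S = ⋂ i, U i

/-- A *Zariski closed* subset of `D^n`: a finite intersection of zero sets of polynomials
over `D`. -/
def IsZariskiClosed (D : Type*) [CommRing D] {n : ℕ} (S : Set (Fin n → D)) : Prop :=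
  ∃ (s : ℕ) (p : Fin s → MvPolynomial (Fin n) D),
    S = ⋂ i, {a : Fin n → D | MvPolynomial.eval a (p i) = 0}

open FirstOrder Language

section TP

variable {Lrel : FirstOrder.Language} [Lrel.IsRelational] {D : Type*} [CommRing D]
  [FirstOrder.Ring.CompatibleRing D] {n : ℕ}

noncomputable def termToPoly : (Language.ring.sum Lrel).Term (Fin n ⊕ D) → MvPolynomial (Fin n) D
  | .var (Sum.inl i) => .X i
  | .var (Sum.inr d) => .C d
  | .func (Sum.inl .add) ts => termToPoly (ts 0) + termToPoly (ts 1)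
  | .func (Sum.inl .mul) ts => termToPoly (ts 0) * termToPoly (ts 1)
  | .func (Sum.inl .neg) ts => - termToPoly (ts 0)
  | .func (Sum.inl .zero) _ => 0
  | .func (Sum.inl .one) _ => 1
  | .func (Sum.inr f) _ => isEmptyElim f

theorem eval_termToPoly [Lrel.Structure D] (t : (Language.ring.sum Lrel).Term (Fin n ⊕ D))
    (a : Fin n → D) :
    MvPolynomial.eval a (termToPoly t) = t.realize (Sum.elim a id) := by
  induction t with
  | var x => cases x <;> simp [termToPoly, Term.realize]
  | func f ts ih =>
    rcases f with f | f
    · cases f <;> simp [termToPoly, Term.realize, ih] <;> erw [Language.funMap_sumInl] <;> simp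
    · exact isEmptyElim f

end TP

section PC
def TermClosed (Lrel : FirstOrder.Language) (D : Type*) [CommRing D]
    [FirstOrder.Ring.CompatibleRing D] [Lrel.Structure D] {n : ℕ} (S : Set (Fin n → D)) : Prop :=
  ∃ (ι : Type) (_ : Fintype ι) (t : ι → (Language.ring.sum Lrel).Term (Fin n ⊕ D)),
    S = ⋂ i, {a : Fin n → D | (t i).realize (Sum.elim a id) = 0}

def SOpen (Lrel : FirstOrder.Language) (D : Type*) [CommRing D]
    [FirstOrder.Ring.CompatibleRing D] [Lrel.Structure D] {n : ℕ} (S : Set (Fin n → D)) : Prop :=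
  ∃ (ι : Type) (_ : Fintype ι) (U : ι → Set (Fin n → D)),
    (∀ i, IsBasicSpecialOpen Lrel D (U i)) ∧ S = ⋂ i, U i

def Pieces (Lrel : FirstOrder.Language) (D : Type*) [CommRing D]
    [FirstOrder.Ring.CompatibleRing D] [Lrel.Structure D] {n : ℕ} (S : Set (Fin n → D)) : Prop :=
  ∃ (ι : Type) (_ : Fintype ι) (Z U : ι → Set (Fin n → D)),
    (∀ i, TermClosed Lrel D (Z i) ∧ SOpen Lrel D (U i)) ∧ S = ⋃ i, Z i ∩ U i

variable {Lrel : FirstOrder.Language} [Lrel.IsRelational] {D : Type*} [CommRing D]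
  [FirstOrder.Ring.CompatibleRing D] [Lrel.Structure D] {n : ℕ}

theorem TermClosed.univ : TermClosed Lrel D (Set.univ : Set (Fin n → D)) :=
  ⟨Empty, inferInstance, isEmptyElim, by simp⟩

theorem TermClosed.single (t : (Language.ring.sum Lrel).Term (Fin n ⊕ D)) :
    TermClosed Lrel D {a : Fin n → D | t.realize (Sum.elim a id) = 0} :=
  ⟨Unit, inferInstance, fun _ => t, by rw [Set.iInter_const]⟩

theorem TermClosed.inter {S T : Set (Fin n → D)} (hS : TermClosed Lrel D S)
    (hT : TermClosed Lrel D T) : TermClosed Lrel D (S ∩ T) := by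
  obtain ⟨ι, _, t, rfl⟩ := hS; obtain ⟨κ, _, u, rfl⟩ := hT
  exact ⟨ι ⊕ κ, inferInstance, Sum.elim t u, by rw [Set.iInter_sum]; rfl⟩

theorem SOpen.univ : SOpen Lrel D (Set.univ : Set (Fin n → D)) :=
  ⟨Empty, inferInstance, isEmptyElim, fun i => isEmptyElim i, by simp⟩

theorem SOpen.basic {S : Set (Fin n → D)} (h : IsBasicSpecialOpen Lrel D S) : SOpen Lrel D S :=
  ⟨Unit, inferInstance, fun _ => S, fun _ => h, by rw [Set.iInter_const]⟩

theorem SOpen.inter {S T : Set (Fin n → D)} (hS : SOpen Lrel D S)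
    (hT : SOpen Lrel D T) : SOpen Lrel D (S ∩ T) := by
  obtain ⟨ι, _, t, ht, rfl⟩ := hS; obtain ⟨κ, _, u, hu, rfl⟩ := hT
  exact ⟨ι ⊕ κ, inferInstance, Sum.elim t u,
    fun i => by cases i with | inl i => exact ht i | inr i => exact hu i,
    by rw [Set.iInter_sum]; rfl⟩

theorem Pieces.empty : Pieces Lrel D (∅ : Set (Fin n → D)) :=
  ⟨Empty, inferInstance, isEmptyElim, isEmptyElim, fun i => isEmptyElim i, by simp⟩

theorem Pieces.univ : Pieces Lrel D (Set.univ : Set (Fin n → D)) :=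
  ⟨Unit, inferInstance, fun _ => Set.univ, fun _ => Set.univ,
    fun _ => ⟨TermClosed.univ, SOpen.univ⟩, by ext x; simp⟩

theorem Pieces.union {S T : Set (Fin n → D)} (hS : Pieces Lrel D S)
    (hT : Pieces Lrel D T) : Pieces Lrel D (S ∪ T) := by
  obtain ⟨ι, _, Z, U, h, rfl⟩ := hS; obtain ⟨κ, _, Z', U', h', rfl⟩ := hT
  refine ⟨ι ⊕ κ, inferInstance, Sum.elim Z Z', Sum.elim U U',
    fun i => by cases i with | inl i => exact h i | inr i => exact h' i, ?_⟩
  rw [Set.iUnion_sum]; rfl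

theorem Pieces.inter {S T : Set (Fin n → D)} (hS : Pieces Lrel D S)
    (hT : Pieces Lrel D T) : Pieces Lrel D (S ∩ T) := by
  obtain ⟨ι, _, Z, U, h, rfl⟩ := hS; obtain ⟨κ, _, Z', U', h', rfl⟩ := hT
  refine ⟨ι × κ, inferInstance, fun p => Z p.1 ∩ Z' p.2, fun p => U p.1 ∩ U' p.2,
    fun p => ⟨(h p.1).1.inter (h' p.2).1, (h p.1).2.inter (h' p.2).2⟩, ?_⟩
  ext x
  simp only [Set.mem_inter_iff, Set.mem_iUnion, Set.mem_inter_iff]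
  constructor
  · rintro ⟨⟨i, hi1, hi2⟩, ⟨j, hj1, hj2⟩⟩
    exact ⟨⟨i, j⟩, ⟨hi1, hj1⟩, ⟨hi2, hj2⟩⟩
  · rintro ⟨⟨i, j⟩, ⟨hi1, hj1⟩, ⟨hi2, hj2⟩⟩
    exact ⟨⟨i, hi1, hi2⟩, ⟨j, hj1, hj2⟩⟩

private theorem biUnion_closed {β ι : Type*} {P : Set β → Prop} (h0 : P ∅)
    (h2 : ∀ s t, P s → P t → P (s ∪ t)) (s : Finset ι) (f : ι → Set β)
    (h : ∀ i ∈ s, P (f i)) : P (⋃ i ∈ s, f i) := by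
  classical
  induction s using Finset.induction with
  | empty => simpa using h0
  | insert _ _ hni ih =>
    rw [Finset.set_biUnion_insert]
    exact h2 _ _ (h _ (Finset.mem_insert_self _ _))
      (ih fun i hi => h i (Finset.mem_insert_of_mem hi))

private theorem biInter_closed {β ι : Type*} {P : Set β → Prop} (h0 : P Set.univ)
    (h2 : ∀ s t, P s → P t → P (s ∩ t)) (s : Finset ι) (f : ι → Set β)
    (h : ∀ i ∈ s, P (f i)) : P (⋂ i ∈ s, f i) := by
  classical
  induction s using Finset.induction with
  | empty => simpa using h0
  | insert _ _ hni ih =>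
    rw [Finset.set_biInter_insert]
    exact h2 _ _ (h _ (Finset.mem_insert_self _ _))
      (ih fun i hi => h i (Finset.mem_insert_of_mem hi))

theorem Pieces.iUnion {ι : Type*} [Fintype ι] {f : ι → Set (Fin n → D)}
    (h : ∀ i, Pieces Lrel D (f i)) : Pieces Lrel D (⋃ i, f i) := by
  have : (⋃ i, f i) = ⋃ i ∈ Finset.univ, f i := by simp
  rw [this]
  exact biUnion_closed Pieces.empty (fun _ _ => Pieces.union) _ _ fun i _ => h i

theorem Pieces.iInter {ι : Type*} [Fintype ι] {f : ι → Set (Fin n → D)}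
    (h : ∀ i, Pieces Lrel D (f i)) : Pieces Lrel D (⋂ i, f i) := by
  have : (⋂ i, f i) = ⋂ i ∈ Finset.univ, f i := by simp
  rw [this]
  exact biInter_closed Pieces.univ (fun _ _ => Pieces.inter) _ _ fun i _ => h i

theorem Pieces.of_termClosed {S : Set (Fin n → D)} (h : TermClosed Lrel D S) :
    Pieces Lrel D S :=
  ⟨Unit, inferInstance, fun _ => S, fun _ => Set.univ,
    fun _ => ⟨h, SOpen.univ⟩, by ext x; simp⟩

theorem Pieces.of_sopen {S : Set (Fin n → D)} (h : SOpen Lrel D S) :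
    Pieces Lrel D S :=
  ⟨Unit, inferInstance, fun _ => Set.univ, fun _ => S,
    fun _ => ⟨TermClosed.univ, h⟩, by ext x; simp⟩

end PC

section PC2
variable {Lrel : FirstOrder.Language} [Lrel.IsRelational] {D : Type*} [CommRing D]
  [FirstOrder.Ring.CompatibleRing D] [Lrel.Structure D] {n : ℕ}

/-- The difference of two terms in the sum language. -/
def subTerm {α : Type*} (t₁ t₂ : (Language.ring.sum Lrel).Term α) :
    (Language.ring.sum Lrel).Term α :=
  Term.func (Sum.inl .add) ![t₁, (Term.func (Sum.inl .neg) ![t₂])]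

theorem realize_subTerm {α : Type*} (t₁ t₂ : (Language.ring.sum Lrel).Term α) (v : α → D) :
    (subTerm t₁ t₂).realize v = t₁.realize v - t₂.realize v := by
  simp [subTerm, Term.realize, sub_eq_add_neg]
  erw [Language.funMap_sumInl (L₂ := Lrel) (S := D)]; simp [Term.realize]
  erw [Language.funMap_sumInl (L₂ := Lrel) (S := D)]; simp

theorem TermClosed.compl_pieces {S : Set (Fin n → D)} (h : TermClosed Lrel D S) :
    Pieces Lrel D Sᶜ := by
  obtain ⟨ι, _, t, rfl⟩ := h
  rw [Set.compl_iInter]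
  refine Pieces.iUnion fun i => Pieces.of_sopen (SOpen.basic (Or.inl ⟨t i, ?_⟩))
  ext a; simp

theorem basic_compl_pieces {S : Set (Fin n → D)} (h : IsBasicSpecialOpen Lrel D S) :
    Pieces Lrel D Sᶜ := by
  rcases h with ⟨t, rfl⟩ | ⟨m, k, R, j, hj, t, rfl | rfl⟩
  · refine Pieces.of_termClosed ?_
    have : {a : Fin n → D | t.realize (Sum.elim a id) ≠ 0}ᶜ
        = {a : Fin n → D | t.realize (Sum.elim a id) = 0} := by ext a; simp
    rw [this]; exact TermClosed.single t
  · have : {a : Fin n → D | (∀ l, (t l).realize (Sum.elim a id) ≠ 0) ∧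
        Structure.RelMap R (Function.extend j (fun l => (t l).realize (Sum.elim a id)) 0)}ᶜ
        = (⋃ l, {a : Fin n → D | (t l).realize (Sum.elim a id) = 0}) ∪
          {a : Fin n → D | (∀ l, (t l).realize (Sum.elim a id) ≠ 0) ∧
            ¬ Structure.RelMap R
              (Function.extend j (fun l => (t l).realize (Sum.elim a id)) 0)} := by
      ext a
      simp only [Set.mem_compl_iff, Set.mem_setOf_eq, Set.mem_union, Set.mem_iUnion]
      by_cases hP : ∀ l, (t l).realize (Sum.elim a id) ≠ 0
      · simp [hP]
      · push_neg at hP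
        obtain ⟨l, hl⟩ := hP
        constructor
        · intro _; exact Or.inl ⟨l, hl⟩
        · rintro (⟨l', hl'⟩ | ⟨hall, _⟩) h'
          · exact h'.1 l' hl'
          · exact hall l hl
    rw [this]
    exact (Pieces.iUnion fun l => Pieces.of_termClosed (TermClosed.single (t l))).union
      (Pieces.of_sopen (SOpen.basic (Or.inr ⟨m, k, R, j, hj, t, Or.inr rfl⟩)))
  · have : {a : Fin n → D | (∀ l, (t l).realize (Sum.elim a id) ≠ 0) ∧
        ¬ Structure.RelMap R (Function.extend j (fun l => (t l).realize (Sum.elim a id)) 0)}ᶜ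
        = (⋃ l, {a : Fin n → D | (t l).realize (Sum.elim a id) = 0}) ∪
          {a : Fin n → D | (∀ l, (t l).realize (Sum.elim a id) ≠ 0) ∧
            Structure.RelMap R
              (Function.extend j (fun l => (t l).realize (Sum.elim a id)) 0)} := by
      ext a
      simp only [Set.mem_compl_iff, Set.mem_setOf_eq, Set.mem_union, Set.mem_iUnion]
      by_cases hP : ∀ l, (t l).realize (Sum.elim a id) ≠ 0
      · simp [hP]
      · push_neg at hP
        obtain ⟨l, hl⟩ := hP
        constructor
        · intro _; exact Or.inl ⟨l, hl⟩
        · rintro (⟨l', hl'⟩ | ⟨hall, _⟩) h'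
          · exact h'.1 l' hl'
          · exact hall l hl
    rw [this]
    exact (Pieces.iUnion fun l => Pieces.of_termClosed (TermClosed.single (t l))).union
      (Pieces.of_sopen (SOpen.basic (Or.inr ⟨m, k, R, j, hj, t, Or.inl rfl⟩)))

theorem SOpen.compl_pieces {S : Set (Fin n → D)} (h : SOpen Lrel D S) :
    Pieces Lrel D Sᶜ := by
  obtain ⟨ι, _, U, hU, rfl⟩ := h
  rw [Set.compl_iInter]
  exact Pieces.iUnion fun i => basic_compl_pieces (hU i)

theorem Pieces.compl {S : Set (Fin n → D)} (h : Pieces Lrel D S) : Pieces Lrel D Sᶜ := by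
  obtain ⟨ι, _, Z, U, hZU, rfl⟩ := h
  rw [Set.compl_iUnion]
  refine Pieces.iInter fun i => ?_
  rw [Set.compl_inter]
  exact ((hZU i).1.compl_pieces).union ((hZU i).2.compl_pieces)

end PC2

section PC3
variable {Lrel : FirstOrder.Language} [Lrel.IsRelational] {D : Type*} [CommRing D]
  [FirstOrder.Ring.CompatibleRing D] [Lrel.Structure D] {n : ℕ}

private theorem extend_orderIso {m : ℕ} (J : Finset (Fin m)) (g : Fin m → D)
    (hg : ∀ i ∉ J, g i = 0) :
    Function.extend (fun l => ((J.orderIsoOfFin rfl) l : Fin m))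
      (fun l => g ((J.orderIsoOfFin rfl) l)) 0 = g := by
  have hinj : Function.Injective (fun l => ((J.orderIsoOfFin rfl) l : Fin m)) :=
    fun a b hab => (J.orderIsoOfFin rfl).injective (Subtype.ext hab)
  funext i
  by_cases hi : i ∈ J
  · obtain ⟨l, hl⟩ : ∃ l, ((J.orderIsoOfFin rfl) l : Fin m) = i :=
      ⟨(J.orderIsoOfFin rfl).symm ⟨i, hi⟩, by simp⟩
    rw [← hl, hinj.extend_apply]
  · rw [Function.extend_apply']
    · exact (hg i hi).symm
    · rintro ⟨l, hl⟩
      exact hi (hl ▸ ((J.orderIsoOfFin rfl) l).2)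

private theorem strictMono_orderIso {m : ℕ} (J : Finset (Fin m)) :
    StrictMono (fun l => ((J.orderIsoOfFin rfl) l : Fin m)) := by
  intro a b hab
  exact Subtype.coe_lt_coe.2 ((J.orderIsoOfFin rfl).strictMono hab)

theorem rel_pieces_aux {m : ℕ} (R : Lrel.Relations m)
    (t : Fin m → (Language.ring.sum Lrel).Term (Fin n ⊕ D)) (c : Bool) :
    Pieces Lrel D {a : Fin n → D |
      Structure.RelMap R (fun i => (t i).realize (Sum.elim a id)) ↔ c = true} := by
  classical
  set rt : (Fin n → D) → Fin m → D := fun a i => (t i).realize (Sum.elim a id) with hrt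
  refine ⟨Finset (Fin m), inferInstance,
    fun J => ⋂ (i : {i : Fin m // i ∉ J}), {a : Fin n → D | rt a i.1 = 0},
    fun J => {a : Fin n → D |
      (∀ l, rt a ((J.orderIsoOfFin rfl) l : Fin m) ≠ 0) ∧
      (Structure.RelMap R (Function.extend (fun l => ((J.orderIsoOfFin rfl) l : Fin m))
        (fun l => rt a ((J.orderIsoOfFin rfl) l : Fin m)) 0) ↔ c = true)},
    fun J => ⟨⟨{i : Fin m // i ∉ J}, inferInstance, fun i => t i.1, rfl⟩, ?_⟩, ?_⟩
  · refine SOpen.basic (Or.inr ⟨m, J.card, R, _, strictMono_orderIso J,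
      fun l => t ((J.orderIsoOfFin rfl) l : Fin m), ?_⟩)
    cases c
    · refine Or.inr ?_; ext a; simp [hrt]
    · refine Or.inl ?_; ext a; simp [hrt]
  · ext a
    simp only [Set.mem_setOf_eq, Set.mem_iUnion, Set.mem_inter_iff, Set.mem_iInter]
    constructor
    · intro h
      refine ⟨Finset.univ.filter (fun i => rt a i ≠ 0), fun i => ?_, fun l => ?_, ?_⟩
      · have := i.2; simp only [Finset.mem_filter, Finset.mem_univ, true_and] at this
        exact not_not.1 this
      · have := ((Finset.univ.filter (fun i => rt a i ≠ 0)).orderIsoOfFin rfl l).2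
        simp only [Finset.mem_filter, Finset.mem_univ, true_and] at this
        exact this
      · rw [extend_orderIso _ (rt a) (fun i hi => by
          simp only [Finset.mem_filter, Finset.mem_univ, true_and, not_not] at hi; exact hi)]
        exact h
    · rintro ⟨J, hZ, hne, hR⟩
      rw [extend_orderIso _ (rt a) (fun i hi => hZ ⟨i, hi⟩)] at hR
      exact hR

end PC3

section PC4
variable {Lrel : FirstOrder.Language} [Lrel.IsRelational] {D : Type*} [CommRing D]
  [FirstOrder.Ring.CompatibleRing D] [Lrel.Structure D] {n : ℕ}

theorem realize_relabel0 (t : (Language.ring.sum Lrel).Term ((Fin n ⊕ D) ⊕ Fin 0))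
    (v : (Fin n ⊕ D) → D) (xs : Fin 0 → D) :
    (t.relabel (Sum.elim id Fin.elim0)).realize v = t.realize (Sum.elim v xs) := by
  rw [Term.realize_relabel]
  congr 1
  funext x
  rcases x with x | x
  · rfl
  · exact x.elim0

theorem qf_pieces (φ : (Language.ring.sum Lrel).BoundedFormula (Fin n ⊕ D) 0)
    (h : φ.IsQF) :
    Pieces Lrel D {a : Fin n → D | φ.Realize (Sum.elim a id) default} ∧
    Pieces Lrel D {a : Fin n → D | φ.Realize (Sum.elim a id) default}ᶜ := by
  induction h with
  | falsum =>
    have h0 : {a : Fin n → D |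
        (BoundedFormula.falsum : (Language.ring.sum Lrel).BoundedFormula (Fin n ⊕ D) 0).Realize
          (Sum.elim a id) default} = ∅ := by
      ext a; simp [BoundedFormula.Realize]
    rw [h0, Set.compl_empty]
    exact ⟨Pieces.empty, Pieces.univ⟩
  | of_isAtomic h =>
    cases h with
    | equal t₁ t₂ =>
      have hset : {a : Fin n → D | (t₁.bdEqual t₂).Realize (Sum.elim a id) default}
          = {a : Fin n → D | (subTerm (t₁.relabel (Sum.elim id Fin.elim0))
              (t₂.relabel (Sum.elim id Fin.elim0))).realize (Sum.elim a id) = 0} := by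
        ext a
        simp only [Set.mem_setOf_eq, BoundedFormula.realize_bdEqual, realize_subTerm,
          realize_relabel0 _ _ (default : Fin 0 → D), sub_eq_zero]
      rw [hset]
      constructor
      · exact Pieces.of_termClosed (TermClosed.single _)
      · refine Pieces.of_sopen (SOpen.basic (Or.inl ⟨subTerm (t₁.relabel (Sum.elim id Fin.elim0)) (t₂.relabel (Sum.elim id Fin.elim0)), ?_⟩))
        ext a; simp
    | rel R ts =>
      rcases R with R | R
      · exact isEmptyElim R
      have h1 : {a : Fin n → D |
            (Language.Relations.boundedFormula (Sum.inr R) ts).Realize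
              (Sum.elim a id) default}
          = {a : Fin n → D | Structure.RelMap R
              (fun i => ((ts i).relabel (Sum.elim id Fin.elim0)).realize (Sum.elim a id))
              ↔ (true : Bool) = true} := by
        ext a
        simp [BoundedFormula.realize_rel, realize_relabel0 _ _ (default : Fin 0 → D)]
        exact Iff.rfl
      have h2 : {a : Fin n → D |
            (Language.Relations.boundedFormula (Sum.inr R) ts).Realize
              (Sum.elim a id) default}ᶜ
          = {a : Fin n → D | Structure.RelMap R
              (fun i => ((ts i).relabel (Sum.elim id Fin.elim0)).realize (Sum.elim a id))
              ↔ (false : Bool) = true} := by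
        ext a
        simp [BoundedFormula.realize_rel, realize_relabel0 _ _ (default : Fin 0 → D)]
        exact Iff.rfl
      rw [h2, h1]
      exact ⟨rel_pieces_aux R _ true, rel_pieces_aux R _ false⟩
  | @imp φ₁ φ₂ h₁ h₂ ih₁ ih₂ =>
    have h1 : {a : Fin n → D | (φ₁.imp φ₂).Realize (Sum.elim a id) default}
        = {a : Fin n → D | φ₁.Realize (Sum.elim a id) default}ᶜ ∪
          {a : Fin n → D | φ₂.Realize (Sum.elim a id) default} := by
      ext a
      simp only [Set.mem_setOf_eq, BoundedFormula.realize_imp, Set.mem_union,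
        Set.mem_compl_iff]
      tauto
    constructor
    · rw [h1]; exact ih₁.2.union ih₂.1
    · rw [h1, Set.compl_union, _root_.compl_compl]
      exact ih₁.1.inter ih₂.2

end PC4


section PC5
variable {Lrel : FirstOrder.Language} [Lrel.IsRelational] {D : Type*} [CommRing D]
  [FirstOrder.Ring.CompatibleRing D] [Lrel.Structure D] {n : ℕ}

theorem TermClosed.isZariskiClosed {S : Set (Fin n → D)} (h : TermClosed Lrel D S) :
    IsZariskiClosed D S := by
  obtain ⟨ι, _, t, rfl⟩ := h
  refine ⟨Fintype.card ι, fun i => termToPoly (t ((Fintype.equivFin ι).symm i)), ?_⟩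
  rw [← (Fintype.equivFin ι).symm.surjective.iInter_comp
    (fun i => {a : Fin n → D | (t i).realize (Sum.elim a id) = 0})]
  refine Set.iInter_congr fun i => ?_
  ext a
  simp [eval_termToPoly]

theorem SOpen.isSpecialOpen {S : Set (Fin n → D)} (h : SOpen Lrel D S) :
    IsSpecialOpen Lrel D S := by
  obtain ⟨ι, _, U, hU, rfl⟩ := h
  exact ⟨Fintype.card ι, fun i => U ((Fintype.equivFin ι).symm i), fun i => hU _,
    ((Fintype.equivFin ι).symm.surjective.iInter_comp U).symm⟩

theorem TermClosed.isClosed (τ : ∀ m : ℕ, TopologicalSpace (Fin m → D))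
    (hterm : ∀ (m s : ℕ) (t : Fin s → (FirstOrder.Language.ring.sum Lrel).Term (Fin m ⊕ D)),
      @Continuous _ _ (τ m) (τ s) fun a l => (t l).realize (Sum.elim a id))
    (hsingleton : ∀ a : D, @IsClosed _ (τ 1) {x : Fin 1 → D | x 0 = a})
    {S : Set (Fin n → D)} (h : TermClosed Lrel D S) : @IsClosed _ (τ n) S := by
  obtain ⟨ι, _, t, rfl⟩ := h
  letI := τ n; letI := τ 1
  refine isClosed_iInter fun i => ?_
  have hs : {a : Fin n → D | (t i).realize (Sum.elim a id) = 0}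
      = (fun a (_ : Fin 1) => (t i).realize (Sum.elim a id)) ⁻¹'
        {x : Fin 1 → D | x 0 = 0} := rfl
  rw [hs]
  exact (hsingleton 0).preimage (hterm n 1 fun _ => t i)

theorem SOpen.isOpen (τ : ∀ m : ℕ, TopologicalSpace (Fin m → D))
    (hterm : ∀ (m s : ℕ) (t : Fin s → (FirstOrder.Language.ring.sum Lrel).Term (Fin m ⊕ D)),
      @Continuous _ _ (τ m) (τ s) fun a l => (t l).realize (Sum.elim a id))
    (hsingleton : ∀ a : D, @IsClosed _ (τ 1) {x : Fin 1 → D | x 0 = a})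
    (hrel : ∀ (m k : ℕ) (R : Lrel.Relations m) (j : Fin k → Fin m), StrictMono j →
      @IsOpen _ (τ k) {b : Fin k → D | (∀ l, b l ≠ 0) ∧
        FirstOrder.Language.Structure.RelMap R (Function.extend j b 0)} ∧
      @IsOpen _ (τ k) {b : Fin k → D | (∀ l, b l ≠ 0) ∧
        ¬ FirstOrder.Language.Structure.RelMap R (Function.extend j b 0)})
    {S : Set (Fin n → D)} (h : SOpen Lrel D S) : @IsOpen _ (τ n) S := by
  obtain ⟨ι, _, U, hU, rfl⟩ := h
  letI := τ n; letI := τ 1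
  refine isOpen_iInter_of_finite fun i => ?_
  rcases hU i with ⟨t, ht⟩ | ⟨m, k, R, j, hj, t, ht | ht⟩
  · have hs : U i = (fun a (_ : Fin 1) => t.realize (Sum.elim a id)) ⁻¹'
          {x : Fin 1 → D | x 0 = 0}ᶜ := by rw [ht]; rfl
    rw [hs]
    exact (hsingleton 0).isOpen_compl.preimage (hterm n 1 fun _ => t)
  · letI := τ k
    have hs : U i = (fun a l => (t l).realize (Sum.elim a id)) ⁻¹'
          {b : Fin k → D | (∀ l, b l ≠ 0) ∧ Structure.RelMap R (Function.extend j b 0)} := by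
      rw [ht]; rfl
    rw [hs]
    exact ((hrel m k R j hj).1).preimage (hterm n k t)
  · letI := τ k
    have hs : U i = (fun a l => (t l).realize (Sum.elim a id)) ⁻¹'
          {b : Fin k → D | (∀ l, b l ≠ 0) ∧ ¬ Structure.RelMap R (Function.extend j b 0)} := by
      rw [ht]; rfl
    rw [hs]
    exact ((hrel m k R j hj).2).preimage (hterm n k t)

end PC5


/-- Let `L` be a language extending the language of rings whose only
function symbols are the ring ones (formalized as `L = ring ⊕ Lrel` with `Lrel`
relational), and let `D` be an infinite integral domain which is an `L`-structure
admitting quantifier elimination and equipped with a topological system.  Then every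
`L`-definable (with parameters) subset of `D^n` is a finite union of intersections of a
Zariski closed subset with a special open subset, and in particular a finite union of
locally closed subsets of `D^n`. -/
theorem piecewise_continuity_statement_2
    {Lrel : FirstOrder.Language} [Lrel.IsRelational] {D : Type*} [CommRing D] [IsDomain D]
    [Infinite D] [FirstOrder.Ring.CompatibleRing D] [Lrel.Structure D]
    (hQE : ∀ (m : ℕ) (φ : (FirstOrder.Language.ring.sum Lrel).Formula (Fin m ⊕ D)),
      ∃ ψ : (FirstOrder.Language.ring.sum Lrel).Formula (Fin m ⊕ D),
        FirstOrder.Language.BoundedFormula.IsQF ψ ∧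
        ∀ a : Fin m → D, φ.Realize (Sum.elim a id) ↔ ψ.Realize (Sum.elim a id))
    (τ : ∀ m : ℕ, TopologicalSpace (Fin m → D))
    (hterm : ∀ (m s : ℕ) (t : Fin s → (FirstOrder.Language.ring.sum Lrel).Term (Fin m ⊕ D)),
      @Continuous _ _ (τ m) (τ s) fun a l => (t l).realize (Sum.elim a id))
    (hsingleton : ∀ a : D, @IsClosed _ (τ 1) {x : Fin 1 → D | x 0 = a})
    (hrel : ∀ (m k : ℕ) (R : Lrel.Relations m) (j : Fin k → Fin m), StrictMono j →
      @IsOpen _ (τ k) {b : Fin k → D | (∀ l, b l ≠ 0) ∧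
        FirstOrder.Language.Structure.RelMap R (Function.extend j b 0)} ∧
      @IsOpen _ (τ k) {b : Fin k → D | (∀ l, b l ≠ 0) ∧
        ¬ FirstOrder.Language.Structure.RelMap R (Function.extend j b 0)})
    {n : ℕ} (S : Set (Fin n → D))
    (hS : ∃ φ : (FirstOrder.Language.ring.sum Lrel).Formula (Fin n ⊕ D),
      S = {a : Fin n → D | φ.Realize (Sum.elim a id)}) :
    (∃ (s : ℕ) (Z U : Fin s → Set (Fin n → D)),
      (∀ i, IsZariskiClosed D (Z i) ∧ IsSpecialOpen Lrel D (U i)) ∧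
      S = ⋃ i, Z i ∩ U i) ∧
    (∃ (s : ℕ) (P : Fin s → Set (Fin n → D)),
      (∀ i, @IsLocallyClosed _ (τ n) (P i)) ∧ S = ⋃ i, P i) := by
  obtain ⟨φ, rfl⟩ := hS
  obtain ⟨ψ, hqf, hiff⟩ := hQE n φ
  have hset : {a : Fin n → D | φ.Realize (Sum.elim a id)}
      = {a : Fin n → D | BoundedFormula.Realize ψ (Sum.elim a id) (default : Fin 0 → D)} := by
    ext a
    exact hiff a
  rw [hset]
  obtain ⟨ι, _, Z, U, hZU, hSeq⟩ := (qf_pieces ψ hqf).1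
  rw [hSeq]
  set e := Fintype.equivFin ι with he
  constructor
  · exact ⟨Fintype.card ι, fun i => Z (e.symm i), fun i => U (e.symm i),
      fun i => ⟨(hZU _).1.isZariskiClosed, (hZU _).2.isSpecialOpen⟩,
      (e.symm.surjective.iUnion_comp (fun i => Z i ∩ U i)).symm⟩
  · refine ⟨Fintype.card ι, fun i => Z (e.symm i) ∩ U (e.symm i), fun i => ?_,
      (e.symm.surjective.iUnion_comp (fun i => Z i ∩ U i)).symm⟩
    letI := τ n
    exact (((hZU _).1.isClosed τ hterm hsingleton).isLocallyClosed).inter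
      (((hZU _).2.isOpen τ hterm hsingleton hrel).isLocallyClosed)
end

section
/- Let L be a first-order language extending the language of rings whose only function symbols are those of the language of rings, and let D be an infinite integral domain which is an L-structure admitting quantifier elimination and equipped with a topological system (topologies τ_n on each D^n such that term maps are continuous, singletons in D are closed, and for every relation symbol R and every choice of coordinates the set of tuples with nonzero coordinates realizing R, and the set realizing its negation, placed at those coordinates with zeros elsewhere, are open). Then every L-definable (with parameters) subset of D^n is a finite disjoint union of L-definable locally closed subsets of D^n. -/
open FirstOrder

open FirstOrder FirstOrder.Language FirstOrder.Language.Structure FirstOrder.Ring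

section Aux

variable {Lrel : FirstOrder.Language} {D : Type*} [CommRing D]
  [FirstOrder.Ring.CompatibleRing D] [Lrel.Structure D] {n : ℕ}

inductive PCDesc (Lrel : FirstOrder.Language) (D : Type*) (n : ℕ) where
  | eq (t : (FirstOrder.Language.ring.sum Lrel).Term (Fin n ⊕ D))
  | rl (m : ℕ) (R : Lrel.Relations m)
      (ts : Fin m → (FirstOrder.Language.ring.sum Lrel).Term (Fin n ⊕ D))

def pcdset : PCDesc Lrel D n → Set (Fin n → D)
  | .eq t => {x | t.realize (Sum.elim x id) = 0}
  | .rl _ R ts => {x | RelMap R fun q => (ts q).realize (Sum.elim x id)}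

def pctm (t : (Language.ring.sum Lrel).Term ((Fin n ⊕ D) ⊕ Fin 0)) :
    (Language.ring.sum Lrel).Term (Fin n ⊕ D) :=
  t.relabel (Sum.elim id Fin.elim0)

theorem realize_pctm (t : (Language.ring.sum Lrel).Term ((Fin n ⊕ D) ⊕ Fin 0))
    (a : Fin n → D) (xs : Fin 0 → D) :
    (pctm t).realize (Sum.elim a id) = t.realize (Sum.elim (Sum.elim a id) xs) := by
  rw [pctm, Term.realize_relabel]
  congr 1
  funext x
  rcases x with x | i
  · rfl
  · exact i.elim0

def pcsub (t₁ t₂ : (Language.ring.sum Lrel).Term (Fin n ⊕ D)) :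
    (Language.ring.sum Lrel).Term (Fin n ⊕ D) :=
  Term.func (Sum.inl addFunc) ![t₁, Term.func (Sum.inl negFunc) ![t₂] ]

theorem realize_pcsub (t₁ t₂ : (Language.ring.sum Lrel).Term (Fin n ⊕ D)) (v : Fin n ⊕ D → D) :
    (pcsub t₁ t₂).realize v = t₁.realize v - t₂.realize v := by
  simp [pcsub, Term.realize, sub_eq_add_neg]

/-- The list of descriptors of a (quantifier-free) formula. -/
def pcdescList : (Language.ring.sum Lrel).BoundedFormula (Fin n ⊕ D) 0 → List (PCDesc Lrel D n)
  | .falsum => []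
  | .equal t₁ t₂ => [.eq (pcsub (pctm t₁) (pctm t₂))]
  | .rel R ts =>
      match R with
      | Sum.inl r => Empty.elim r
      | Sum.inr R' => (List.ofFn fun q => PCDesc.eq (pctm (ts q))) ++
          [PCDesc.rl _ R' (fun q => pctm (ts q))]
  | .imp f g => pcdescList f ++ pcdescList g
  | .all _ => []

theorem pcdescList_closed :
    ∀ (φ : (Language.ring.sum Lrel).BoundedFormula (Fin n ⊕ D) 0)
      (m : ℕ) (R : Lrel.Relations m)
      (ts : Fin m → (Language.ring.sum Lrel).Term (Fin n ⊕ D)),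
      PCDesc.rl m R ts ∈ pcdescList φ → ∀ q, PCDesc.eq (ts q) ∈ pcdescList φ
  | .falsum => by simp [pcdescList]
  | .equal t₁ t₂ => by simp [pcdescList]
  | .rel R₀ ts₀ => by
      rcases R₀ with r | R₀
      · exact Empty.elim r
      · intro m R ts h q
        simp only [pcdescList, List.mem_append, List.mem_ofFn, Set.mem_range,
          List.mem_singleton] at h ⊢
        rcases h with ⟨_, h⟩ | h
        · exact absurd h (by simp)
        · left
          cases h
          exact ⟨q, rfl⟩
  | .imp f g => by
      intro m R ts h q
      rw [pcdescList, List.mem_append] at h ⊢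
      rcases h with h | h
      · exact Or.inl (pcdescList_closed f m R ts h q)
      · exact Or.inr (pcdescList_closed g m R ts h q)
  | .all _ => by simp [pcdescList]

theorem pc_realize_iff_of_pattern
    {φ : (Language.ring.sum Lrel).BoundedFormula (Fin n ⊕ D) 0}
    (hφ : φ.IsQF) {a b : Fin n → D}
    (h : ∀ d ∈ pcdescList φ, (a ∈ pcdset d ↔ b ∈ pcdset d)) :
    (φ.Realize (Sum.elim a id) (default : Fin 0 → D) ↔
      φ.Realize (Sum.elim b id) (default : Fin 0 → D)) := by
  induction hφ with
  | falsum => exact Iff.rfl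
  | @of_isAtomic φ h' =>
      cases h' with
      | equal t₁ t₂ =>
          have hd := h (PCDesc.eq (pcsub (pctm t₁) (pctm t₂)))
            (by simp [Term.bdEqual, pcdescList])
          have key : ∀ c : Fin n → D,
              ((t₁.bdEqual t₂).Realize (Sum.elim c id) (default : Fin 0 → D) ↔
                (pcsub (pctm t₁) (pctm t₂)).realize (Sum.elim c id) = 0) := by
            intro c
            rw [BoundedFormula.realize_bdEqual, realize_pcsub,
              realize_pctm _ _ default, realize_pctm _ _ default, sub_eq_zero]
          rw [key a, key b]
          exact hd
      | @rel l R ts =>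
          rcases R with r | R
          · exact Empty.elim r
          · have hd := h (PCDesc.rl l R (fun q => pctm (ts q)))
              (by simp [Relations.boundedFormula, pcdescList])
            have key : ∀ c : Fin n → D,
                ((Relations.boundedFormula (Sum.inr R) ts).Realize
                    (Sum.elim c id) (default : Fin 0 → D) ↔
                  c ∈ pcdset (PCDesc.rl l R (fun q => pctm (ts q)))) := by
              intro c
              show RelMap R _ ↔ RelMap R _
              refine iff_of_eq (congrArg _ ?_)
              funext q
              rw [realize_pctm _ _ default]
            rw [key a, key b]
            exact hd
  | imp h₁ h₂ ih₁ ih₂ =>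
      rw [BoundedFormula.realize_imp, BoundedFormula.realize_imp]
      have ha := ih₁ fun d hd => h d (by rw [pcdescList, List.mem_append]; exact Or.inl hd)
      have hb := ih₂ fun d hd => h d (by rw [pcdescList, List.mem_append]; exact Or.inr hd)
      rw [ha, hb]


noncomputable def pcnz (x₀ : Fin n → D) {m : ℕ}
    (ts : Fin m → (Language.ring.sum Lrel).Term (Fin n ⊕ D)) : Finset (Fin m) :=
  @Finset.filter _ (fun q => (ts q).realize (Sum.elim x₀ id) ≠ 0) (Classical.decPred _)
    Finset.univ

theorem mem_pcnz (x₀ : Fin n → D) {m : ℕ}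
    (ts : Fin m → (Language.ring.sum Lrel).Term (Fin n ⊕ D)) (q : Fin m) :
    q ∈ pcnz x₀ ts ↔ (ts q).realize (Sum.elim x₀ id) ≠ 0 := by
  classical
  simp [pcnz, Finset.mem_filter]

/-- The open/closed replacement of a basic set on the cell of `x₀`. -/
noncomputable def pcg (x₀ : Fin n → D) : PCDesc Lrel D n → Bool → Set (Fin n → D)
  | .eq t, true => {x | t.realize (Sum.elim x id) = 0}
  | .eq t, false => {x | t.realize (Sum.elim x id) ≠ 0}
  | .rl _ R ts, b =>
      (fun (x : Fin n → D) (l : Fin (pcnz x₀ ts).card) =>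
          (ts ((pcnz x₀ ts).orderEmbOfFin rfl l)).realize (Sum.elim x id)) ⁻¹'
        {y | (∀ l, y l ≠ 0) ∧
          (RelMap R (Function.extend (⇑((pcnz x₀ ts).orderEmbOfFin rfl)) y 0) ↔ b = true)}

theorem mem_pcg_rl_iff (x₀ x : Fin n → D) {m : ℕ} (R : Lrel.Relations m)
    (ts : Fin m → (Language.ring.sum Lrel).Term (Fin n ⊕ D)) (b : Bool)
    (hpat : ∀ q, ((ts q).realize (Sum.elim x id) = 0 ↔ (ts q).realize (Sum.elim x₀ id) = 0)) :
    x ∈ pcg x₀ (PCDesc.rl m R ts) b ↔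
      ((RelMap R fun q => (ts q).realize (Sum.elim x id)) ↔ b = true) := by
  set s : Finset (Fin m) := pcnz x₀ ts with hs
  set j : Fin s.card ↪o Fin m := s.orderEmbOfFin rfl with hj
  have hnz : ∀ l, (ts (j l)).realize (Sum.elim x id) ≠ 0 := by
    intro l h0
    have hmem : j l ∈ s := s.orderEmbOfFin_mem rfl l
    exact (mem_pcnz x₀ ts (j l)).mp hmem ((hpat (j l)).mp h0)
  have hext : Function.extend (⇑j) (fun l => (ts (j l)).realize (Sum.elim x id)) 0 =
      fun q => (ts q).realize (Sum.elim x id) := by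
    funext q
    by_cases hq : q ∈ s
    · have : q ∈ Set.range (⇑j) := by
        rw [hj, Finset.range_orderEmbOfFin]
        exact hq
      obtain ⟨l, rfl⟩ := this
      rw [Function.Injective.extend_apply j.injective]
    · have hq' : ¬∃ l, j l = q := by
        intro ⟨l, hl⟩
        exact hq (hl ▸ s.orderEmbOfFin_mem rfl l)
      rw [Function.extend_apply' _ _ _ hq']
      have : (ts q).realize (Sum.elim x₀ id) = 0 := by
        by_contra h0
        exact hq ((mem_pcnz x₀ ts q).mpr h0)
      exact ((hpat q).mpr this).symm
  show (∀ l, _ ≠ 0) ∧ (RelMap R _ ↔ b = true) ↔ _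
  rw [hext]
  exact and_iff_right hnz

theorem pc_locallyClosed_iInter {X : Type*} [TopologicalSpace X] {ι : Type*} [Finite ι]
    {f : ι → Set X} (h : ∀ i, IsLocallyClosed (f i)) : IsLocallyClosed (⋂ i, f i) := by
  choose U Z hU hZ hUZ using h
  refine ⟨⋂ i, U i, ⋂ i, Z i, isOpen_iInter_of_finite hU, isClosed_iInter hZ, ?_⟩
  rw [← Set.iInter_inter_distrib]
  exact Set.iInter_congr hUZ


theorem pcg_open_or_closed (τ : ∀ m : ℕ, TopologicalSpace (Fin m → D))
    (hterm : ∀ (m s : ℕ) (t : Fin s → (Language.ring.sum Lrel).Term (Fin m ⊕ D)),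
      @Continuous _ _ (τ m) (τ s) fun a l => (t l).realize (Sum.elim a id))
    (hsingleton : ∀ a : D, @IsClosed _ (τ 1) {x : Fin 1 → D | x 0 = a})
    (hrel : ∀ (m k : ℕ) (R : Lrel.Relations m) (j : Fin k → Fin m), StrictMono j →
      @IsOpen _ (τ k) {b : Fin k → D | (∀ l, b l ≠ 0) ∧
        RelMap R (Function.extend j b 0)} ∧
      @IsOpen _ (τ k) {b : Fin k → D | (∀ l, b l ≠ 0) ∧
        ¬ RelMap R (Function.extend j b 0)})
    (x₀ : Fin n → D) (d : PCDesc Lrel D n) (b : Bool) :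
    @IsOpen _ (τ n) (pcg x₀ d b) ∨ @IsClosed _ (τ n) (pcg x₀ d b) := by
  letI := τ n
  cases d with
  | eq t =>
    have hc : IsClosed {x : Fin n → D | t.realize (Sum.elim x id) = 0} := by
      letI := τ 1
      have hcont := hterm n 1 (fun _ => t)
      have := (hsingleton 0).preimage hcont
      exact this
    cases b with
    | true => exact Or.inr hc
    | false => exact Or.inl hc.isOpen_compl
  | rl m R ts =>
    left
    letI := τ (pcnz x₀ ts).card
    have hcont := hterm n (pcnz x₀ ts).card (fun l => ts ((pcnz x₀ ts).orderEmbOfFin rfl l))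
    have hmono : StrictMono (⇑((pcnz x₀ ts).orderEmbOfFin rfl)) :=
      ((pcnz x₀ ts).orderEmbOfFin rfl).strictMono
    have h2 := hrel m (pcnz x₀ ts).card R _ hmono
    show IsOpen ((fun (x : Fin n → D) (l : Fin (pcnz x₀ ts).card) =>
          (ts ((pcnz x₀ ts).orderEmbOfFin rfl l)).realize (Sum.elim x id)) ⁻¹'
        {y | (∀ l, y l ≠ 0) ∧
          (RelMap R (Function.extend (⇑((pcnz x₀ ts).orderEmbOfFin rfl)) y 0) ↔ b = true)})
    refine IsOpen.preimage hcont ?_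
    cases b with
    | true =>
      convert h2.1 using 1
      ext y
      simp
    | false =>
      convert h2.2 using 1
      ext y
      simp

theorem pc_cell_locallyClosed (τ : ∀ m : ℕ, TopologicalSpace (Fin m → D))
    (hterm : ∀ (m s : ℕ) (t : Fin s → (Language.ring.sum Lrel).Term (Fin m ⊕ D)),
      @Continuous _ _ (τ m) (τ s) fun a l => (t l).realize (Sum.elim a id))
    (hsingleton : ∀ a : D, @IsClosed _ (τ 1) {x : Fin 1 → D | x 0 = a})
    (hrel : ∀ (m k : ℕ) (R : Lrel.Relations m) (j : Fin k → Fin m), StrictMono j →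
      @IsOpen _ (τ k) {b : Fin k → D | (∀ l, b l ≠ 0) ∧
        RelMap R (Function.extend j b 0)} ∧
      @IsOpen _ (τ k) {b : Fin k → D | (∀ l, b l ≠ 0) ∧
        ¬ RelMap R (Function.extend j b 0)})
    (Ds : List (PCDesc Lrel D n))
    (hcl : ∀ m R ts, PCDesc.rl m R ts ∈ Ds → ∀ q, PCDesc.eq (ts q) ∈ Ds)
    (σ : Fin Ds.length → Bool) (x₀ : Fin n → D)
    (hx₀ : ∀ i, x₀ ∈ pcdset (Ds.get i) ↔ σ i = true) :
    @IsLocallyClosed _ (τ n) {x | ∀ i, x ∈ pcdset (Ds.get i) ↔ σ i = true} := by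
  letI := τ n
  have pat' : ∀ x : Fin n → D,
      (∀ (i : Fin Ds.length) t, Ds.get i = PCDesc.eq t →
        (x ∈ pcdset (PCDesc.eq t) ↔ σ i = true)) →
      ∀ m R ts, PCDesc.rl m R ts ∈ Ds →
      ∀ q, ((ts q).realize (Sum.elim x id) = 0 ↔ (ts q).realize (Sum.elim x₀ id) = 0) := by
    intro x hx m R ts hmem q
    obtain ⟨i, hi⟩ := List.get_of_mem (hcl m R ts hmem q)
    have h1 := hx i _ hi
    have h2 := hx₀ i
    rw [hi] at h2
    exact h1.trans h2.symm
  have key : {x : Fin n → D | ∀ i, x ∈ pcdset (Ds.get i) ↔ σ i = true} =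
      ⋂ i, pcg x₀ (Ds.get i) (σ i) := by
    ext x
    simp only [Set.mem_setOf_eq, Set.mem_iInter]
    constructor
    · intro hx i
      cases hd : Ds.get i with
      | eq t =>
        have hxi := hx i
        rw [hd] at hxi
        cases hσ : σ i with
        | false =>
          rw [hσ] at hxi
          show (t.realize (Sum.elim x id) ≠ 0)
          intro h0
          simpa using hxi.mp h0
        | true =>
          rw [hσ] at hxi
          exact hxi.mpr rfl
      | rl m R ts =>
        have hmem : PCDesc.rl m R ts ∈ Ds := by
          rw [← hd]; exact List.get_mem Ds i
        have hpat := pat' x (fun i' t hi' => by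
          have := hx i'; rwa [hi'] at this) m R ts hmem
        rw [mem_pcg_rl_iff x₀ x R ts (σ i) hpat]
        have hxi := hx i
        rw [hd] at hxi
        exact hxi
    · intro hx
      have heqpat : ∀ (i' : Fin Ds.length) t, Ds.get i' = PCDesc.eq t →
          (x ∈ pcdset (PCDesc.eq t) ↔ σ i' = true) := by
        intro i' t hi'
        have hxi := hx i'
        rw [hi'] at hxi
        cases hσ : σ i' with
        | false =>
          rw [hσ] at hxi
          exact iff_of_false hxi (by simp)
        | true =>
          rw [hσ] at hxi
          exact iff_of_true hxi rfl
      intro i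
      cases hd : Ds.get i with
      | eq t =>
        exact heqpat i t hd
      | rl m R ts =>
        have hmem : PCDesc.rl m R ts ∈ Ds := by
          rw [← hd]; exact List.get_mem Ds i
        have hpat := pat' x heqpat m R ts hmem
        have hxi := hx i
        rw [hd, mem_pcg_rl_iff x₀ x R ts (σ i) hpat] at hxi
        exact hxi
  rw [key]
  exact pc_locallyClosed_iInter fun i =>
    (pcg_open_or_closed τ hterm hsingleton hrel x₀ (Ds.get i) (σ i)).elim
      IsOpen.isLocallyClosed IsClosed.isLocallyClosed


noncomputable def pcdFormula : PCDesc Lrel D n → (Language.ring.sum Lrel).Formula (Fin n ⊕ D)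
  | .eq t => t.equal (Term.func (Sum.inl zeroFunc) ![])
  | .rl _ R ts => Relations.formula (Sum.inr R) ts

theorem realize_pcdFormula (d : PCDesc Lrel D n) (a : Fin n → D) :
    (pcdFormula d).Realize (Sum.elim a id) ↔ a ∈ pcdset d := by
  cases d with
  | eq t =>
    show (t.equal _).Realize _ ↔ _
    rw [Formula.realize_equal]
    simp [Term.realize, pcdset]
  | rl m R ts =>
    show (Relations.formula _ _).Realize _ ↔ _
    exact Formula.realize_rel (R := (Sum.inr R : (Language.ring.sum Lrel).Relations m)) (ts := ts) (M := D) (v := Sum.elim a id)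

theorem pc_defi_iInter : ∀ (N : ℕ) (B : Fin N → Set (Fin n → D)),
    (∀ i, ∃ φ : (Language.ring.sum Lrel).Formula (Fin n ⊕ D),
      B i = {a | φ.Realize (Sum.elim a id)}) →
    ∃ φ : (Language.ring.sum Lrel).Formula (Fin n ⊕ D),
      (⋂ i, B i) = {a | φ.Realize (Sum.elim a id)}
  | 0, B, _ => ⟨⊤, by
      ext a
      simp [Formula.realize_top]⟩
  | (N+1), B, h => by
      obtain ⟨φ₀, h₀⟩ := h 0
      obtain ⟨φ', h'⟩ := pc_defi_iInter N (fun i => B i.succ) (fun i => h i.succ)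
      refine ⟨φ₀ ⊓ φ', ?_⟩
      have : (⋂ i, B i) = B 0 ∩ ⋂ i : Fin N, B i.succ := by
        ext x
        simp only [Set.mem_iInter, Set.mem_inter_iff]
        exact ⟨fun hx => ⟨hx 0, fun i => hx i.succ⟩,
          fun hx i => Fin.cases hx.1 hx.2 i⟩
      rw [this, h₀, h']
      ext a
      simp [Formula.realize_inf]

end Aux

/-- Let `L` be a language extending the language of rings whose only
function symbols are the ring ones (formalized as `L = ring ⊕ Lrel` with `Lrel`
relational), and let `D` be an infinite integral domain which is an `L`-structure
admitting quantifier elimination and equipped with a topological system.  Then every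
`L`-definable (with parameters) subset of `D^n` is a finite disjoint union of
`L`-definable locally closed subsets of `D^n`. -/
theorem piecewise_continuity_statement_3
    {Lrel : FirstOrder.Language} [Lrel.IsRelational] {D : Type*} [CommRing D] [IsDomain D]
    [Infinite D] [FirstOrder.Ring.CompatibleRing D] [Lrel.Structure D]
    -- quantifier elimination with parameters from `D`
    (hQE : ∀ (m : ℕ) (φ : (FirstOrder.Language.ring.sum Lrel).Formula (Fin m ⊕ D)),
      ∃ ψ : (FirstOrder.Language.ring.sum Lrel).Formula (Fin m ⊕ D),
        FirstOrder.Language.BoundedFormula.IsQF ψ ∧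
        ∀ a : Fin m → D, φ.Realize (Sum.elim a id) ↔ ψ.Realize (Sum.elim a id))
    -- the topological system
    (τ : ∀ m : ℕ, TopologicalSpace (Fin m → D))
    (hterm : ∀ (m s : ℕ) (t : Fin s → (FirstOrder.Language.ring.sum Lrel).Term (Fin m ⊕ D)),
      @Continuous _ _ (τ m) (τ s) fun a l => (t l).realize (Sum.elim a id))
    (hsingleton : ∀ a : D, @IsClosed _ (τ 1) {x : Fin 1 → D | x 0 = a})
    (hrel : ∀ (m k : ℕ) (R : Lrel.Relations m) (j : Fin k → Fin m), StrictMono j →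
      @IsOpen _ (τ k) {b : Fin k → D | (∀ l, b l ≠ 0) ∧
        FirstOrder.Language.Structure.RelMap R (Function.extend j b 0)} ∧
      @IsOpen _ (τ k) {b : Fin k → D | (∀ l, b l ≠ 0) ∧
        ¬ FirstOrder.Language.Structure.RelMap R (Function.extend j b 0)})
    -- an `L`-definable set with parameters
    {n : ℕ} (S : Set (Fin n → D))
    (hS : ∃ φ : (FirstOrder.Language.ring.sum Lrel).Formula (Fin n ⊕ D),
      S = {a : Fin n → D | φ.Realize (Sum.elim a id)}) :
    ∃ (s : ℕ) (P : Fin s → Set (Fin n → D)),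
      (∀ i, (∃ φ : (FirstOrder.Language.ring.sum Lrel).Formula (Fin n ⊕ D),
          P i = {a : Fin n → D | φ.Realize (Sum.elim a id)}) ∧
        @IsLocallyClosed _ (τ n) (P i)) ∧
      Pairwise (Function.onFun Disjoint P) ∧
      S = ⋃ i, P i := by
  classical
  obtain ⟨φS, hφS⟩ := hS
  obtain ⟨ψ, hqf, hiff⟩ := hQE n φS
  have hSψ : S = {a : Fin n → D | ψ.Realize (Sum.elim a id)} := by
    rw [hφS]; ext a; exact hiff a
  let Ds : List (PCDesc Lrel D n) := pcdescList ψ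
  let cell : (Fin Ds.length → Bool) → Set (Fin n → D) :=
    fun σ => {x | ∀ i, x ∈ pcdset (Ds.get i) ↔ σ i = true}
  let e := Fintype.equivFin (Fin Ds.length → Bool)
  refine ⟨Fintype.card (Fin Ds.length → Bool), fun i => cell (e.symm i) ∩ S, ?_, ?_, ?_⟩
  · intro i
    dsimp only
    constructor
    · -- definability
      have hcell : ∃ φ : (Language.ring.sum Lrel).Formula (Fin n ⊕ D),
          cell (e.symm i) = {a | φ.Realize (Sum.elim a id)} := by
        have hiter : cell (e.symm i) = ⋂ i', (cond ((e.symm i) i')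
            (pcdset (Ds.get i')) (pcdset (Ds.get i'))ᶜ) := by
          ext x
          show (∀ i', x ∈ pcdset (Ds.get i') ↔ (e.symm i) i' = true) ↔ _
          simp only [Set.mem_iInter]
          refine forall_congr' fun i' => ?_
          cases (e.symm i) i' <;> simp
        rw [hiter]
        refine pc_defi_iInter Ds.length _ (fun i' => ?_)
        cases (e.symm i) i' with
        | true =>
          refine ⟨pcdFormula (Ds.get i'), ?_⟩
          ext a
          exact (realize_pcdFormula (Ds.get i') a).symm
        | false =>
          refine ⟨(pcdFormula (Ds.get i')).not, ?_⟩
          ext a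
          show (a ∈ (pcdset (Ds.get i'))ᶜ) ↔ a ∈ {a | (pcdFormula (Ds.get i')).not.Realize (Sum.elim a id)}
          rw [Set.mem_compl_iff, Set.mem_setOf_eq, Formula.realize_not, realize_pcdFormula]
      obtain ⟨φc, hc⟩ := hcell
      refine ⟨φc ⊓ ψ, ?_⟩
      rw [hc, hSψ]
      ext a
      simp [Formula.realize_inf]
    · -- locally closed
      letI := τ n
      rcases (cell (e.symm i) ∩ S).eq_empty_or_nonempty with hE | ⟨x₀, hx₀c, hx₀S⟩
      · rw [hE]
        exact isOpen_empty.isLocallyClosed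
      · have hx₀c' : ∀ i', x₀ ∈ pcdset (Ds.get i') ↔ (e.symm i) i' = true := hx₀c
        have hsub : cell (e.symm i) ⊆ S := by
          intro x hx
          have hx' : ∀ i', x ∈ pcdset (Ds.get i') ↔ (e.symm i) i' = true := hx
          rw [hSψ] at hx₀S ⊢
          have hdpat : ∀ d ∈ Ds, (x₀ ∈ pcdset d ↔ x ∈ pcdset d) := by
            intro d hd
            obtain ⟨i', hi'⟩ := List.get_of_mem hd
            rw [← hi']
            exact (hx₀c' i').trans (hx' i').symm
          exact (pc_realize_iff_of_pattern hqf hdpat).mp hx₀S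
        have heq : cell (e.symm i) ∩ S = cell (e.symm i) := Set.inter_eq_left.mpr hsub
        rw [heq]
        exact pc_cell_locallyClosed τ hterm hsingleton hrel Ds
          (pcdescList_closed ψ) (e.symm i) x₀ hx₀c'
  · -- pairwise disjoint
    intro i j hij
    have hσ : e.symm i ≠ e.symm j := fun h => hij (e.symm.injective h)
    obtain ⟨i₀, hi₀⟩ := Function.ne_iff.mp hσ
    refine Set.disjoint_left.mpr ?_
    rintro x ⟨hx1, -⟩ ⟨hx2, -⟩
    have h1 : x ∈ pcdset (Ds.get i₀) ↔ (e.symm i) i₀ = true := hx1 i₀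
    have h2 : x ∈ pcdset (Ds.get i₀) ↔ (e.symm j) i₀ = true := hx2 i₀
    apply hi₀
    exact Bool.eq_iff_iff.mpr (h1.symm.trans h2)
  · -- union
    apply Set.Subset.antisymm
    · intro a ha
      have hmem : a ∈ cell (fun i' => decide (a ∈ pcdset (Ds.get i'))) := by
        intro i'
        rw [decide_eq_true_eq]
      refine Set.mem_iUnion.mpr ⟨e (fun i' => decide (a ∈ pcdset (Ds.get i'))), ?_⟩
      show a ∈ cell (e.symm (e (fun i' => decide (a ∈ pcdset (Ds.get i'))))) ∩ S
      rw [Equiv.symm_apply_apply]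
      exact ⟨hmem, ha⟩
    · exact Set.iUnion_subset fun i => Set.inter_subset_right
end

section
/- Let L be a first-order language extending the language of rings whose only function symbols are those of the language of rings, and let D be an integral domain which is an L-structure equipped with a topological system (topologies τ_n on each D^n such that term maps are continuous, singletons in D are closed, and for every relation symbol R and every choice of coordinates the set of tuples with nonzero coordinates realizing R, and the set realizing its negation, placed at those coordinates with zeros elsewhere, are open). Then every subset of D^n defined by a quantifier-free L-formula with parameters from D is a finite union of special locally closed subsets of D^n. -/
open FirstOrder

/-- A *special closed* subset of `D^n`: a finite intersection of zero sets of
`L(D)`-terms, where `L = ring ⊕ Lrel` is a language extending the language of rings with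
only relation symbols added, and parameters from `D` are represented by extra variables
evaluated via `id`. -/
def IsSpecialClosed (Lrel : FirstOrder.Language) (D : Type*) [CommRing D]
    [FirstOrder.Ring.CompatibleRing D] [Lrel.Structure D] {n : ℕ}
    (S : Set (Fin n → D)) : Prop :=
  ∃ (s : ℕ) (t : Fin s → (FirstOrder.Language.ring.sum Lrel).Term (Fin n ⊕ D)),
    S = ⋂ i, {a : Fin n → D | (t i).realize (Sum.elim a id) = 0}

/-- A *special locally closed* subset of `D^n`: an intersection of a special open subset
with a special closed subset. -/
def IsSpecialLocallyClosed (Lrel : FirstOrder.Language) (D : Type*) [CommRing D]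
    [FirstOrder.Ring.CompatibleRing D] [Lrel.Structure D] {n : ℕ}
    (S : Set (Fin n → D)) : Prop :=
  ∃ U C : Set (Fin n → D),
    IsSpecialOpen Lrel D U ∧ IsSpecialClosed Lrel D C ∧ S = U ∩ C

set_option linter.unusedSectionVars false

namespace PCS4
open FirstOrder.Language

lemma reindex_iUnion {α ι κ : Type*} (e : κ ≃ ι) (f : ι → Set α) :
    ⋃ k, f (e k) = ⋃ i, f i := by
  ext x
  simp only [Set.mem_iUnion]
  exact ⟨fun ⟨k, h⟩ => ⟨e k, h⟩, fun ⟨i, h⟩ => ⟨e.symm i, by simpa using h⟩⟩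

lemma reindex_iInter {α ι κ : Type*} (e : κ ≃ ι) (f : ι → Set α) :
    ⋂ k, f (e k) = ⋂ i, f i := by
  ext x
  simp only [Set.mem_iInter]
  exact ⟨fun h i => by simpa using h (e.symm i), fun h k => h (e k)⟩

variable {Lrel : FirstOrder.Language} {D : Type*} [CommRing D]
    [FirstOrder.Ring.CompatibleRing D] [Lrel.Structure D] {n : ℕ}

/-- Finite union of special locally closed sets. -/
def FU (Lrel : FirstOrder.Language) (D : Type*) [CommRing D]
    [FirstOrder.Ring.CompatibleRing D] [Lrel.Structure D] {n : ℕ}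
    (S : Set (Fin n → D)) : Prop :=
  ∃ (s : ℕ) (P : Fin s → Set (Fin n → D)),
    (∀ i, IsSpecialLocallyClosed Lrel D (P i)) ∧ S = ⋃ i, P i

lemma isSpecialClosed_iInter {ι : Type*} [Finite ι] {C : ι → Set (Fin n → D)}
    (h : ∀ i, IsSpecialClosed Lrel D (C i)) : IsSpecialClosed Lrel D (⋂ i, C i) := by
  cases nonempty_fintype ι
  choose s t ht using h
  let e := Fintype.equivFin (Σ i, Fin (s i))
  refine ⟨_, fun p => t (e.symm p).1 (e.symm p).2, ?_⟩
  rw [reindex_iInter e.symm (fun p : Σ i, Fin (s i) =>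
    {a : Fin n → D | (t p.1 p.2).realize (Sum.elim a id) = 0})]
  rw [Set.iInter_sigma]
  exact Set.iInter_congr ht

lemma isSpecialOpen_iInter {ι : Type*} [Finite ι] {U : ι → Set (Fin n → D)}
    (h : ∀ i, IsSpecialOpen Lrel D (U i)) : IsSpecialOpen Lrel D (⋂ i, U i) := by
  cases nonempty_fintype ι
  choose s V hV hU using h
  let e := Fintype.equivFin (Σ i, Fin (s i))
  refine ⟨_, fun p => V (e.symm p).1 (e.symm p).2, fun p => hV _ _, ?_⟩
  rw [reindex_iInter e.symm (fun p : Σ i, Fin (s i) => V p.1 p.2)]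
  rw [Set.iInter_sigma]
  exact Set.iInter_congr hU

lemma isSpecialClosed_univ : IsSpecialClosed Lrel D (Set.univ : Set (Fin n → D)) :=
  ⟨0, Fin.elim0, by simp⟩

lemma isSpecialOpen_univ : IsSpecialOpen Lrel D (Set.univ : Set (Fin n → D)) :=
  ⟨0, Fin.elim0, fun i => i.elim0, by simp⟩

lemma isSpecialClosed_single (t : (ring.sum Lrel).Term (Fin n ⊕ D)) :
    IsSpecialClosed Lrel D {a : Fin n → D | t.realize (Sum.elim a id) = 0} :=
  ⟨1, fun _ => t, (Set.iInter_const _).symm⟩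

lemma isSpecialOpen_of_basic {U : Set (Fin n → D)} (h : IsBasicSpecialOpen Lrel D U) :
    IsSpecialOpen Lrel D U :=
  ⟨1, fun _ => U, fun _ => h, (Set.iInter_const _).symm⟩

lemma slc_iInter {ι : Type*} [Finite ι] {P : ι → Set (Fin n → D)}
    (h : ∀ i, IsSpecialLocallyClosed Lrel D (P i)) :
    IsSpecialLocallyClosed Lrel D (⋂ i, P i) := by
  choose U C hU hC hP using h
  refine ⟨⋂ i, U i, ⋂ i, C i, isSpecialOpen_iInter hU, isSpecialClosed_iInter hC, ?_⟩
  rw [← Set.iInter_inter_distrib]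
  exact Set.iInter_congr hP

lemma slc_inter {S T : Set (Fin n → D)} (hS : IsSpecialLocallyClosed Lrel D S)
    (hT : IsSpecialLocallyClosed Lrel D T) : IsSpecialLocallyClosed Lrel D (S ∩ T) := by
  have h := slc_iInter (ι := Bool) (P := fun b => bif b then S else T)
    (fun b => by cases b <;> simpa)
  have e : (⋂ b : Bool, (bif b then S else T)) = S ∩ T := by
    ext x; simp [Set.mem_iInter, Bool.forall_bool, and_comm]
  rwa [e] at h

lemma slc_univ : IsSpecialLocallyClosed Lrel D (Set.univ : Set (Fin n → D)) :=
  ⟨Set.univ, Set.univ, isSpecialOpen_univ, isSpecialClosed_univ, by simp⟩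

lemma slc_of_open {U : Set (Fin n → D)} (h : IsSpecialOpen Lrel D U) :
    IsSpecialLocallyClosed Lrel D U :=
  ⟨U, Set.univ, h, isSpecialClosed_univ, by simp⟩

lemma slc_of_closed {C : Set (Fin n → D)} (h : IsSpecialClosed Lrel D C) :
    IsSpecialLocallyClosed Lrel D C :=
  ⟨Set.univ, C, isSpecialOpen_univ, h, by simp⟩

lemma slc_of_basic {U : Set (Fin n → D)} (h : IsBasicSpecialOpen Lrel D U) :
    IsSpecialLocallyClosed Lrel D U :=
  slc_of_open (isSpecialOpen_of_basic h)

lemma fu_of_slc {S : Set (Fin n → D)} (h : IsSpecialLocallyClosed Lrel D S) :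
    FU Lrel D S :=
  ⟨1, fun _ => S, fun _ => h, (Set.iUnion_const _).symm⟩

lemma fu_iUnion_slc {ι : Type*} [Finite ι] {P : ι → Set (Fin n → D)}
    (h : ∀ i, IsSpecialLocallyClosed Lrel D (P i)) : FU Lrel D (⋃ i, P i) := by
  cases nonempty_fintype ι
  let e := Fintype.equivFin ι
  exact ⟨_, fun p => P (e.symm p), fun p => h _, (reindex_iUnion e.symm P).symm⟩

lemma fu_iUnion {ι : Type*} [Finite ι] {P : ι → Set (Fin n → D)}
    (h : ∀ i, FU Lrel D (P i)) : FU Lrel D (⋃ i, P i) := by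
  choose s Q hQ hP using h
  have : (⋃ i, P i) = ⋃ p : Σ i, Fin (s i), Q p.1 p.2 := by
    rw [Set.iUnion_sigma]
    exact Set.iUnion_congr hP
  rw [this]
  exact fu_iUnion_slc (fun p => hQ _ _)

lemma fu_union {S T : Set (Fin n → D)} (hS : FU Lrel D S) (hT : FU Lrel D T) :
    FU Lrel D (S ∪ T) := by
  have h := fu_iUnion (ι := Bool) (P := fun b => bif b then S else T)
    (fun b => by cases b <;> simpa)
  have e : (⋃ b : Bool, (bif b then S else T)) = S ∪ T := by
    ext x; simp [Set.mem_iUnion, Bool.exists_bool, or_comm]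
  rwa [e] at h

lemma fu_empty : FU Lrel D (∅ : Set (Fin n → D)) :=
  ⟨0, Fin.elim0, fun i => i.elim0, by simp⟩

lemma fu_univ : FU Lrel D (Set.univ : Set (Fin n → D)) := fu_of_slc slc_univ

lemma fu_inter {S T : Set (Fin n → D)} (hS : FU Lrel D S) (hT : FU Lrel D T) :
    FU Lrel D (S ∩ T) := by
  obtain ⟨s, P, hP, rfl⟩ := hS
  obtain ⟨t, Q, hQ, rfl⟩ := hT
  have : (⋃ i, P i) ∩ (⋃ j, Q j) = ⋃ p : Fin s × Fin t, P p.1 ∩ Q p.2 := by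
    ext x; simp only [Set.mem_inter_iff, Set.mem_iUnion, Prod.exists]; tauto
  rw [this]
  exact fu_iUnion_slc (fun p => slc_inter (hP p.1) (hQ p.2))

lemma fu_iInter_fin : ∀ {s : ℕ} {P : Fin s → Set (Fin n → D)},
    (∀ i, FU Lrel D (P i)) → FU Lrel D (⋂ i, P i) := by
  intro s
  induction s with
  | zero =>
    intro P h
    have : (⋂ i : Fin 0, P i) = Set.univ := by simp
    rw [this]; exact fu_univ
  | succ s ih =>
    intro P h
    have e : (⋂ i : Fin (s + 1), P i) = P 0 ∩ ⋂ i : Fin s, P i.succ := by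
      ext x; simp [Set.mem_iInter, Fin.forall_fin_succ]
    rw [e]
    exact fu_inter (h 0) (ih fun i => h i.succ)

lemma fu_iInter {ι : Type*} [Finite ι] {P : ι → Set (Fin n → D)}
    (h : ∀ i, FU Lrel D (P i)) : FU Lrel D (⋂ i, P i) := by
  cases nonempty_fintype ι
  let e := Fintype.equivFin ι
  rw [← reindex_iInter e.symm P]
  exact fu_iInter_fin (fun p => h _)


/-! ### Complements -/

lemma fu_compl_basic {U : Set (Fin n → D)} (h : IsBasicSpecialOpen Lrel D U) :
    FU Lrel D Uᶜ := by
  rcases h with ⟨t, rfl⟩ | ⟨m, k, R, j, hj, t, rfl | rfl⟩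
  · have e : {a : Fin n → D | t.realize (Sum.elim a id) ≠ 0}ᶜ =
        {a : Fin n → D | t.realize (Sum.elim a id) = 0} := by
      ext a; simp
    rw [e]
    exact fu_of_slc (slc_of_closed (isSpecialClosed_single t))
  · have e : ({a : Fin n → D | (∀ l, (t l).realize (Sum.elim a id) ≠ 0) ∧
        Structure.RelMap R
          (Function.extend j (fun l => (t l).realize (Sum.elim a id)) 0)})ᶜ =
        (⋃ l, {a : Fin n → D | (t l).realize (Sum.elim a id) = 0}) ∪
        {a : Fin n → D | (∀ l, (t l).realize (Sum.elim a id) ≠ 0) ∧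
          ¬ Structure.RelMap R
            (Function.extend j (fun l => (t l).realize (Sum.elim a id)) 0)} := by
      ext a
      simp only [Set.mem_compl_iff, Set.mem_setOf_eq, Set.mem_union, Set.mem_iUnion]
      constructor
      · intro hn
        by_cases hp : ∀ l, (t l).realize (Sum.elim a id) ≠ 0
        · exact Or.inr ⟨hp, fun hQ => hn ⟨hp, hQ⟩⟩
        · push_neg at hp; obtain ⟨l, hl⟩ := hp; exact Or.inl ⟨l, hl⟩
      · rintro (⟨l, hl⟩ | ⟨hp, hQ⟩) ⟨hp', hQ'⟩
        · exact hp' l hl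
        · exact hQ hQ'
    rw [e]
    refine fu_union (fu_iUnion_slc fun l => slc_of_closed (isSpecialClosed_single (t l)))
      (fu_of_slc (slc_of_basic (Or.inr ⟨m, k, R, j, hj, t, Or.inr rfl⟩)))
  · have e : ({a : Fin n → D | (∀ l, (t l).realize (Sum.elim a id) ≠ 0) ∧
        ¬ Structure.RelMap R
          (Function.extend j (fun l => (t l).realize (Sum.elim a id)) 0)})ᶜ =
        (⋃ l, {a : Fin n → D | (t l).realize (Sum.elim a id) = 0}) ∪
        {a : Fin n → D | (∀ l, (t l).realize (Sum.elim a id) ≠ 0) ∧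
          Structure.RelMap R
            (Function.extend j (fun l => (t l).realize (Sum.elim a id)) 0)} := by
      ext a
      simp only [Set.mem_compl_iff, Set.mem_setOf_eq, Set.mem_union, Set.mem_iUnion]
      constructor
      · intro hn
        by_cases hp : ∀ l, (t l).realize (Sum.elim a id) ≠ 0
        · refine Or.inr ⟨hp, ?_⟩
          by_contra hQ
          exact hn ⟨hp, hQ⟩
        · push_neg at hp; obtain ⟨l, hl⟩ := hp; exact Or.inl ⟨l, hl⟩
      · rintro (⟨l, hl⟩ | ⟨hp, hQ⟩) ⟨hp', hQ'⟩
        · exact hp' l hl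
        · exact hQ' hQ
    rw [e]
    refine fu_union (fu_iUnion_slc fun l => slc_of_closed (isSpecialClosed_single (t l)))
      (fu_of_slc (slc_of_basic (Or.inr ⟨m, k, R, j, hj, t, Or.inl rfl⟩)))

lemma fu_compl_closed {C : Set (Fin n → D)} (h : IsSpecialClosed Lrel D C) :
    FU Lrel D Cᶜ := by
  obtain ⟨s, t, rfl⟩ := h
  rw [Set.compl_iInter]
  refine fu_iUnion fun i => ?_
  have e : {a : Fin n → D | (t i).realize (Sum.elim a id) = 0}ᶜ =
      {a : Fin n → D | (t i).realize (Sum.elim a id) ≠ 0} := by ext a; simp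
  rw [e]
  exact fu_of_slc (slc_of_basic (Or.inl ⟨t i, rfl⟩))

lemma fu_compl_open {U : Set (Fin n → D)} (h : IsSpecialOpen Lrel D U) :
    FU Lrel D Uᶜ := by
  obtain ⟨s, V, hV, rfl⟩ := h
  rw [Set.compl_iInter]
  exact fu_iUnion fun i => fu_compl_basic (hV i)

lemma fu_compl_slc {S : Set (Fin n → D)} (h : IsSpecialLocallyClosed Lrel D S) :
    FU Lrel D Sᶜ := by
  obtain ⟨U, C, hU, hC, rfl⟩ := h
  rw [Set.compl_inter]
  exact fu_union (fu_compl_open hU) (fu_compl_closed hC)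

lemma fu_compl {S : Set (Fin n → D)} (h : FU Lrel D S) : FU Lrel D Sᶜ := by
  obtain ⟨s, P, hP, rfl⟩ := h
  rw [Set.compl_iUnion]
  exact fu_iInter fun i => fu_compl_slc (hP i)

/-! ### Atomic sets -/

lemma isSpecialClosed_eqSet (t₁ t₂ : (ring.sum Lrel).Term (Fin n ⊕ D)) :
    IsSpecialClosed Lrel D
      {a : Fin n → D | t₁.realize (Sum.elim a id) = t₂.realize (Sum.elim a id)} := by
  have e : {a : Fin n → D | t₁.realize (Sum.elim a id) = t₂.realize (Sum.elim a id)} =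
      {a : Fin n → D |
        (Functions.apply₂ (L := ring.sum Lrel) (Sum.inl Ring.addFunc) t₁
          (Functions.apply₁ (L := ring.sum Lrel) (Sum.inl Ring.negFunc) t₂)).realize
            (Sum.elim a id) = 0} := by
    ext a
    simp only [Set.mem_setOf_eq]
    erw [Term.realize_functions_apply₂, Term.realize_functions_apply₁, funMap_sumInl (L₂ := Lrel),
      funMap_sumInl (L₂ := Lrel), Ring.CompatibleRing.funMap_add, Ring.CompatibleRing.funMap_neg]
    simp only [Matrix.cons_val_zero, Matrix.cons_val_one, Matrix.head_cons]
    rw [← sub_eq_add_neg, sub_eq_zero]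
  rw [e]
  exact isSpecialClosed_single _

/-! ### Relation sets -/

lemma fu_relSet {m : ℕ} (R : Lrel.Relations m)
    (t : Fin m → (ring.sum Lrel).Term (Fin n ⊕ D)) :
    FU Lrel D
      {a : Fin n → D | Structure.RelMap R (fun i => (t i).realize (Sum.elim a id))} := by
  classical
  have key : ∀ (A : Finset (Fin m)) (a : Fin n → D),
      (∀ i, i ∉ A → (t i).realize (Sum.elim a id) = 0) →
      Function.extend (⇑(A.orderEmbOfFin rfl))
        (fun l => (t (A.orderEmbOfFin rfl l)).realize (Sum.elim a id)) 0
        = fun i => (t i).realize (Sum.elim a id) := by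
    intro A a h0
    funext i
    by_cases hi : i ∈ A
    · obtain ⟨l, hl⟩ : ∃ l, A.orderEmbOfFin rfl l = i := by
        have : i ∈ Set.range (A.orderEmbOfFin rfl) := by
          rw [Finset.range_orderEmbOfFin]; exact_mod_cast hi
        exact this
      subst hl
      rw [(A.orderEmbOfFin rfl).injective.extend_apply]
    · rw [Function.extend_apply']
      · exact (h0 i hi).symm
      · rintro ⟨l, hl⟩
        exact hi (hl ▸ Finset.orderEmbOfFin_mem A rfl l)
  have main : {a : Fin n → D | Structure.RelMap R (fun i => (t i).realize (Sum.elim a id))}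
      = ⋃ A : Finset (Fin m),
        ({a : Fin n → D |
            (∀ l, (t (A.orderEmbOfFin rfl l)).realize (Sum.elim a id) ≠ 0) ∧
            Structure.RelMap R (Function.extend (⇑(A.orderEmbOfFin rfl))
              (fun l => (t (A.orderEmbOfFin rfl l)).realize (Sum.elim a id)) 0)} ∩
          ⋂ i : {i : Fin m // i ∉ A}, {a : Fin n → D | (t i.1).realize (Sum.elim a id) = 0}) := by
    ext a
    simp only [Set.mem_setOf_eq, Set.mem_iUnion, Set.mem_inter_iff, Set.mem_iInter,
      Subtype.forall]
    constructor
    · intro hR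
      refine ⟨Finset.univ.filter (fun i => (t i).realize (Sum.elim a id) ≠ 0), ?_, ?_⟩
      · have h0 : ∀ i, i ∉ Finset.univ.filter (fun i => (t i).realize (Sum.elim a id) ≠ 0) →
            (t i).realize (Sum.elim a id) = 0 := by
          intro i hi
          by_contra hne
          exact hi (by simp [hne])
        refine ⟨fun l => ?_, ?_⟩
        · have hm := Finset.orderEmbOfFin_mem
            (Finset.univ.filter (fun i => (t i).realize (Sum.elim a id) ≠ 0)) rfl l
          rw [Finset.mem_filter] at hm
          exact hm.2
        · rw [key _ a h0]; exact hR
      · intro i hi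
        by_contra hne
        exact hi (by simp [hne])
    · rintro ⟨A, ⟨hne, hRel⟩, hcl⟩
      rwa [key A a hcl] at hRel
  rw [main]
  refine fu_iUnion_slc fun A => ?_
  refine ⟨_, _, isSpecialOpen_of_basic (Or.inr ⟨m, A.card, R, ⇑(A.orderEmbOfFin rfl),
    (A.orderEmbOfFin rfl).strictMono, fun l => t (A.orderEmbOfFin rfl l), Or.inl rfl⟩),
    isSpecialClosed_iInter (fun i : {i : Fin m // i ∉ A} =>
      isSpecialClosed_single (t i.1)), rfl⟩

/-! ### Main induction -/

lemma fu_qf (φ : (ring.sum Lrel).Formula (Fin n ⊕ D)) (hφ : φ.IsQF) :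
    FU Lrel D {a : Fin n → D | φ.Realize (Sum.elim a id)} := by
  have hv : ∀ (a : Fin n → D) (t : (ring.sum Lrel).Term ((Fin n ⊕ D) ⊕ Fin 0)),
      t.realize (Sum.elim (Sum.elim a id) (default : Fin 0 → D)) =
        (t.relabel (Sum.elim id Fin.elim0)).realize (Sum.elim a id) := by
    intro a t
    rw [Term.realize_relabel]
    congr 1
    funext p
    rcases p with p | p
    · rfl
    · exact p.elim0
  induction hφ with
  | falsum =>
    have e : {a : Fin n → D |
        Formula.Realize (BoundedFormula.falsum : (ring.sum Lrel).Formula (Fin n ⊕ D))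
          (Sum.elim a id)} = ∅ := by
      ext a
      simp only [Set.mem_setOf_eq, Set.mem_empty_iff_false, iff_false]
      exact fun h => h
    rw [e]; exact fu_empty
  | of_isAtomic h =>
    cases h with
    | equal t₁ t₂ =>
      have e : {a : Fin n → D | Formula.Realize (t₁.bdEqual t₂) (Sum.elim a id)} =
          {a : Fin n → D |
            (t₁.relabel (Sum.elim id Fin.elim0)).realize (Sum.elim a id) =
            (t₂.relabel (Sum.elim id Fin.elim0)).realize (Sum.elim a id)} := by
        ext a
        simp only [Set.mem_setOf_eq, Formula.Realize, BoundedFormula.realize_bdEqual, hv a]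
      rw [e]
      exact fu_of_slc (slc_of_closed (isSpecialClosed_eqSet _ _))
    | @rel l R ts =>
      rcases R with r | R
      · exact isEmptyElim r
      · have e : {a : Fin n → D |
            Formula.Realize (Relations.boundedFormula (Sum.inr R) ts) (Sum.elim a id)} =
            {a : Fin n → D | Structure.RelMap R
              (fun i => ((ts i).relabel (Sum.elim id Fin.elim0)).realize (Sum.elim a id))} := by
          ext a
          simp only [Set.mem_setOf_eq, Formula.Realize]
          erw [BoundedFormula.realize_rel, relMap_sumInr]
          simp only [hv a]
        rw [e]
        exact fu_relSet R _
  | imp h₁ h₂ ih₁ ih₂ =>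
    rename_i φ₁ φ₂
    have e : {a : Fin n → D | Formula.Realize (φ₁.imp φ₂) (Sum.elim a id)} =
        {a : Fin n → D | Formula.Realize φ₁ (Sum.elim a id)}ᶜ ∪
        {a : Fin n → D | Formula.Realize φ₂ (Sum.elim a id)} := by
      ext a
      simp only [Set.mem_setOf_eq, Set.mem_union, Set.mem_compl_iff, Formula.Realize,
        BoundedFormula.realize_imp]
      tauto
    rw [e]
    exact fu_union (fu_compl ih₁) ih₂

end PCS4

/-- Let `L` be a language extending the language of rings whose only
function symbols are the ring ones (formalized as `L = ring ⊕ Lrel` with `Lrel`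
relational), and let `D` be an integral domain which is an `L`-structure equipped with a
topological system.  Then every subset of `D^n` defined by a quantifier-free `L`-formula
with parameters from `D` is a finite union of special locally closed subsets of `D^n`. -/
theorem piecewise_continuity_statement_4
    {Lrel : FirstOrder.Language} [Lrel.IsRelational] {D : Type*} [CommRing D] [IsDomain D]
    [FirstOrder.Ring.CompatibleRing D] [Lrel.Structure D]
    -- the topological system
    (τ : ∀ m : ℕ, TopologicalSpace (Fin m → D))
    (hterm : ∀ (m s : ℕ) (t : Fin s → (FirstOrder.Language.ring.sum Lrel).Term (Fin m ⊕ D)),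
      @Continuous _ _ (τ m) (τ s) fun a l => (t l).realize (Sum.elim a id))
    (hsingleton : ∀ a : D, @IsClosed _ (τ 1) {x : Fin 1 → D | x 0 = a})
    (hrel : ∀ (m k : ℕ) (R : Lrel.Relations m) (j : Fin k → Fin m), StrictMono j →
      @IsOpen _ (τ k) {b : Fin k → D | (∀ l, b l ≠ 0) ∧
        FirstOrder.Language.Structure.RelMap R (Function.extend j b 0)} ∧
      @IsOpen _ (τ k) {b : Fin k → D | (∀ l, b l ≠ 0) ∧
        ¬ FirstOrder.Language.Structure.RelMap R (Function.extend j b 0)})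
    -- a quantifier-free definable set
    {n : ℕ} (S : Set (Fin n → D))
    (φ : (FirstOrder.Language.ring.sum Lrel).Formula (Fin n ⊕ D))
    (hφ : FirstOrder.Language.BoundedFormula.IsQF φ)
    (hS : S = {a : Fin n → D | φ.Realize (Sum.elim a id)}) :
    ∃ (s : ℕ) (P : Fin s → Set (Fin n → D)),
      (∀ i, IsSpecialLocallyClosed Lrel D (P i)) ∧ S = ⋃ i, P i := by
  subst hS
  exact PCS4.fu_qf φ hφ
end
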